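/- For all n ≥ 2, H_{2n-3} = (-1)^n · sum_{j=2}^{n} LS(n,j) · j! · s(j,2) − δ_{n,2}, where LS(n,j) are Legendre-Stirling numbers of the second kind, s(j,2) are classical (signed) Stirling numbers of the first kind, and H_{2k-1} are the Genocchi numbers of the second kind. -/

import Mathlib

/-- `F̃ 1 = 1`, `F̃_{n+1}(z) = z(z+1) F̃_n(z+1) - (z-1)z F̃_n(z)`. -/
def Ftilde : ℕ → ℚ → ℚ
  | 0, _ => 1
  | 1, _ => 1
  | n + 2, z => z * (z + 1) * Ftilde (n + 1) (z + 1) - (z - 1) * z * Ftilde (n + 1) z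

/-- Genocchi numbers of the second kind: `genocchiH n = H_{2n-1} = F̃_n(1)`. -/
def genocchiH (n : ℕ) : ℚ := Ftilde n 1

/-- Legendre-Stirling numbers of the second kind. -/
def legendreLS : ℕ → ℕ → ℚ
  | 0, 0 => 1
  | 0, _ + 1 => 0
  | _ + 1, 0 => 0
  | n + 1, j + 1 => legendreLS n j + ((j : ℚ) + 1) * ((j : ℚ) + 2) * legendreLS n (j + 1)

/-- Classical (signed) Stirling numbers of the first kind:
`x(x-1)⋯(x-n+1) = ∑_j s(n,j) x^j`, via `s(n+1,j) = s(n,j-1) - n s(n,j)`. -/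
def stirlingFirst : ℕ → ℕ → ℚ
  | 0, 0 => 1
  | 0, _ + 1 => 0
  | _ + 1, 0 => 0
  | n + 1, j + 1 => stirlingFirst n j - (n : ℚ) * stirlingFirst n (j + 1)

/-- `R k z = k! (z+1)(z+2)⋯(z+k-1)`. -/
def Rpoly : ℕ → ℚ → ℚ
  | 0, _ => 1
  | 1, _ => 1
  | k + 2, z => ((k : ℚ) + 2) * (z + (k : ℚ) + 1) * Rpoly (k + 1) z

lemma Rpoly_succ (k : ℕ) (hk : 1 ≤ k) (z : ℚ) :
    Rpoly (k + 1) z = ((k : ℚ) + 1) * (z + (k : ℚ)) * Rpoly k z := by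
  match k, hk with
  | m + 1, _ =>
    rw [show m + 1 + 1 = m + 2 from rfl, Rpoly]
    push_cast
    ring

lemma Rpoly_one (k : ℕ) : Rpoly k 1 = (k.factorial : ℚ) * (k.factorial : ℚ) := by
  induction k with
  | zero => simp [Rpoly]
  | succ m ih =>
    match m, ih with
    | 0, _ => simp [Rpoly]
    | m + 1, ih =>
      rw [Rpoly, ih, Nat.factorial_succ (m+1)]
      push_cast
      ring

lemma legendreLS_zero (n : ℕ) (hn : 1 ≤ n) : legendreLS n 0 = 0 := by
  match n, hn with
  | m + 1, _ => rfl

lemma legendreLS_of_lt : ∀ n j : ℕ, n < j → legendreLS n j = 0 := by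
  intro n
  induction n with
  | zero =>
    intro j hj
    match j, hj with
    | i + 1, _ => rfl
  | succ m ih =>
    intro j hj
    match j, hj with
    | i + 1, hj =>
      rw [legendreLS, ih i (by omega), ih (i+1) (by omega)]
      ring

lemma key1 (k : ℕ) (hk : 1 ≤ k) (z : ℚ) :
    z * (z + 1) * Rpoly k (z + 1) = z * (z + (k : ℚ)) * Rpoly k z := by
  induction k with
  | zero => omega
  | succ m ih =>
    rcases Nat.lt_or_ge 1 (m + 1) with h | h
    · have hm : 1 ≤ m := by omega
      rw [Rpoly_succ m hm, Rpoly_succ m hm]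
      push_cast
      linear_combination ((m : ℚ) + 1) * (z + (m : ℚ) + 1) * ih hm
    · have : m = 0 := by omega
      subst this
      norm_num [Rpoly]

lemma Ftilde_succ (n : ℕ) (hn : 1 ≤ n) (z : ℚ) :
    Ftilde (n + 1) z = z * (z + 1) * Ftilde n (z + 1) - (z - 1) * z * Ftilde n z := by
  match n, hn with
  | m + 1, _ => rw [show m + 1 + 1 = m + 2 from rfl, Ftilde]

lemma legendreLS_succ_succ (n j : ℕ) :
    legendreLS (n + 1) (j + 1)
      = legendreLS n j + ((j : ℚ) + 1) * ((j : ℚ) + 2) * legendreLS n (j + 1) := by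
  rw [legendreLS]

lemma Ftilde_eq_sum (n : ℕ) (hn : 1 ≤ n) :
    ∀ z : ℚ, Ftilde n z
      = ∑ k ∈ Finset.range (n + 1), (-1 : ℚ) ^ (n + k) * legendreLS n k * Rpoly k z := by
  induction n, hn using Nat.le_induction with
  | base =>
    intro z
    simp [Finset.sum_range_succ, Ftilde, legendreLS, Rpoly]
  | succ n hn ih =>
    intro z
    rw [Ftilde_succ n hn z, ih (z + 1), ih z, Finset.mul_sum, Finset.mul_sum,
      ← Finset.sum_sub_distrib]
    conv_rhs => rw [Finset.sum_range_succ']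
    have h0 : legendreLS (n + 1) 0 = 0 := rfl
    simp only [h0, mul_zero, zero_mul, add_zero]
    set F' : ℕ → ℚ := fun j => (-1 : ℚ) ^ (n + j + 1) * (j : ℚ) * ((j : ℚ) + 1)
        * legendreLS n j * Rpoly j z with hF'
    have hsplit : ∀ i ∈ Finset.range (n + 1),
        (-1 : ℚ) ^ (n + 1 + (i + 1)) * legendreLS (n + 1) (i + 1) * Rpoly (i + 1) z
          = (-1 : ℚ) ^ (n + i) * legendreLS n i * Rpoly (i + 1) z + F' (i + 1) := by
      intro i _
      rw [legendreLS_succ_succ]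
      simp only [hF']
      have hpow : (-1 : ℚ) ^ (n + 1 + (i + 1)) = (-1 : ℚ) ^ (n + i) := by
        rw [show n + 1 + (i + 1) = (n + i) + 2 by omega, pow_add]; norm_num
      have hpow2 : (-1 : ℚ) ^ (n + (i + 1) + 1) = (-1 : ℚ) ^ (n + i) := by
        rw [show n + (i + 1) + 1 = (n + i) + 2 by omega, pow_add]; norm_num
      rw [hpow, hpow2]
      push_cast
      ring
    rw [Finset.sum_congr rfl hsplit, Finset.sum_add_distrib]
    have h2 : ∑ i ∈ Finset.range (n + 1), F' (i + 1) = ∑ k ∈ Finset.range (n + 1), F' k := by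
      have ha := Finset.sum_range_succ' F' (n + 1)
      have hb := Finset.sum_range_succ F' (n + 1)
      have hF0 : F' 0 = 0 := by simp [hF']
      have hFn : F' (n + 1) = 0 := by
        simp [hF', legendreLS_of_lt n (n + 1) (by omega)]
      rw [hb, hFn, hF0] at ha
      linarith
    rw [h2, ← Finset.sum_add_distrib]
    apply Finset.sum_congr rfl
    intro k hk
    rcases Nat.eq_zero_or_pos k with rfl | hk1
    · simp [hF', legendreLS_zero n hn, Rpoly]
    · have h1 := key1 k hk1 z
      have h3 := Rpoly_succ k hk1 z
      simp only [hF']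
      have hpow3 : (-1 : ℚ) ^ (n + k + 1) = -(-1 : ℚ) ^ (n + k) := by
        rw [pow_succ]; ring
      rw [hpow3, h3]
      linear_combination ((-1 : ℚ) ^ (n + k) * legendreLS n k) * h1

lemma stirlingFirst_zero (k : ℕ) (hk : 1 ≤ k) : stirlingFirst k 0 = 0 := by
  match k, hk with
  | m + 1, _ => rfl

lemma stirlingFirst_succ_one (n : ℕ) :
    stirlingFirst (n + 1) 1 = stirlingFirst n 0 - (n : ℚ) * stirlingFirst n 1 := by
  rw [show (1 : ℕ) = 0 + 1 from rfl, stirlingFirst]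

lemma stirlingFirst_succ_two (n : ℕ) :
    stirlingFirst (n + 1) 2 = stirlingFirst n 1 - (n : ℚ) * stirlingFirst n 2 := by
  rw [show (2 : ℕ) = 1 + 1 from rfl, stirlingFirst]

lemma stirlingFirst_one_two : stirlingFirst 1 2 = 0 := by
  rw [stirlingFirst_succ_two]
  norm_num [stirlingFirst]

lemma stirlingFirst_one (k : ℕ) (hk : 1 ≤ k) :
    stirlingFirst k 1 = (-1 : ℚ) ^ (k + 1) * (((k - 1).factorial : ℚ)) := by
  induction k, hk using Nat.le_induction with
  | base => norm_num [stirlingFirst_succ_one, stirlingFirst]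
  | succ k hk ih =>
    rw [stirlingFirst_succ_one, stirlingFirst_zero k hk, ih]
    have hf : (k.factorial : ℚ) = (k : ℚ) * (((k - 1).factorial : ℚ)) := by
      exact_mod_cast (Nat.mul_factorial_pred (by omega)).symm
    rw [show k + 1 - 1 = k from rfl, hf, pow_succ]
    ring

lemma Wlem (m : ℕ) (hm : 1 ≤ m) :
    ∑ j ∈ Finset.range (m + 2), legendreLS (m + 1) j * (j.factorial : ℚ) * stirlingFirst j 2
      = ∑ k ∈ Finset.range (m + 1),
          legendreLS m k * ((k + 1).factorial : ℚ) * stirlingFirst k 1 := by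
  rw [Finset.sum_range_succ']
  rw [legendreLS_zero (m + 1) (by omega)]
  simp only [zero_mul, add_zero]
  set G' : ℕ → ℚ := fun j => (j : ℚ) * ((j : ℚ) + 1) * legendreLS m j * (j.factorial : ℚ)
      * stirlingFirst j 2 with hG'
  have hsplit : ∀ i ∈ Finset.range (m + 1),
      legendreLS (m + 1) (i + 1) * ((i + 1).factorial : ℚ) * stirlingFirst (i + 1) 2
        = legendreLS m i * ((i + 1).factorial : ℚ) * stirlingFirst i 1 + (G' (i + 1) - G' i) := by
    intro i _
    rw [legendreLS_succ_succ]
    simp only [hG']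
    rw [stirlingFirst_succ_two]
    have hf : ((i + 1).factorial : ℚ) = ((i : ℚ) + 1) * (i.factorial : ℚ) := by
      rw [Nat.factorial_succ]; push_cast; ring
    rw [hf]
    push_cast
    ring
  rw [Finset.sum_congr rfl hsplit, Finset.sum_add_distrib, Finset.sum_range_sub G' (m + 1)]
  have h1 : G' (m + 1) = 0 := by simp [hG', legendreLS_of_lt m (m + 1) (by omega)]
  have h2 : G' 0 = 0 := by simp [hG']
  rw [h1, h2]
  ring

lemma Dlem (m : ℕ) (hm : 1 ≤ m) :
    ∑ j ∈ Finset.range (m + 2), (-1 : ℚ) ^ (m + 1 + j) * legendreLS (m + 1) j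
        * (j.factorial : ℚ) * (((j - 1).factorial : ℚ)) = 0 := by
  rw [Finset.sum_range_succ']
  rw [legendreLS_zero (m + 1) (by omega)]
  simp only [mul_zero, zero_mul, add_zero]
  set H' : ℕ → ℚ := fun j => (-1 : ℚ) ^ (m + j) * (j : ℚ) * ((j : ℚ) + 1) * legendreLS m j
      * (j.factorial : ℚ) * (((j - 1).factorial : ℚ)) with hH'
  have hsplit : ∀ i ∈ Finset.range (m + 1),
      (-1 : ℚ) ^ (m + 1 + (i + 1)) * legendreLS (m + 1) (i + 1)
          * ((i + 1).factorial : ℚ) * (((i + 1 - 1).factorial : ℚ))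
        = H' i - H' (i + 1) := by
    intro i _
    rw [legendreLS_succ_succ]
    simp only [hH', show i + 1 - 1 = i from rfl]
    have hp1 : (-1 : ℚ) ^ (m + 1 + (i + 1)) = (-1 : ℚ) ^ (m + i) := by
      rw [show m + 1 + (i + 1) = (m + i) + 2 by omega, pow_add]; norm_num
    have hp2 : (-1 : ℚ) ^ (m + (i + 1)) = -(-1 : ℚ) ^ (m + i) := by
      rw [show m + (i + 1) = (m + i) + 1 by omega, pow_succ]; ring
    rw [hp1, hp2]
    rcases Nat.eq_zero_or_pos i with rfl | hi
    · rw [legendreLS_zero m hm]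
      norm_num
      ring
    · have hf1 : ((i + 1).factorial : ℚ) = ((i : ℚ) + 1) * (i.factorial : ℚ) := by
        rw [Nat.factorial_succ]; push_cast; ring
      have hf2 : (i.factorial : ℚ) = (i : ℚ) * (((i - 1).factorial : ℚ)) := by
        exact_mod_cast (Nat.mul_factorial_pred hi.ne').symm
      rw [hf1]
      push_cast
      linear_combination ((-1 : ℚ) ^ (m + i) * legendreLS m i * ((i : ℚ) + 1)
        * (i.factorial : ℚ)) * hf2
  rw [Finset.sum_congr rfl hsplit, Finset.sum_range_sub' H' (m + 1)]
  have h1 : H' (m + 1) = 0 := by simp [hH', legendreLS_of_lt m (m + 1) (by omega)]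
  have h2 : H' 0 = 0 := by simp [hH']
  rw [h1, h2]
  ring

lemma Elem (m : ℕ) (hm : 1 ≤ m) :
    ∑ k ∈ Finset.range (m + 1), (-1 : ℚ) ^ (m + k) * legendreLS m k * (k.factorial : ℚ)
        * (((k - 1).factorial : ℚ)) = if m = 1 then 1 else 0 := by
  rcases eq_or_ne m 1 with rfl | h1
  · norm_num [Finset.sum_range_succ, legendreLS]
  · rw [if_neg h1]
    obtain ⟨m', rfl⟩ : ∃ m', m = m' + 1 := ⟨m - 1, by omega⟩
    exact Dlem m' (by omega)

/-- `H_{2n-3} = (-1)^n ∑_{j=2}^n LS(n,j) j! s(j,2) − δ_{n,2}` for `n ≥ 2`. -/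
theorem genocchiH_LS_stirling (n : ℕ) (hn : 2 ≤ n) :
    genocchiH (n - 1) =
      (-1) ^ n * (∑ j ∈ Finset.Icc 2 n, legendreLS n j * (j.factorial : ℚ) * stirlingFirst j 2)
        - (if n = 2 then 1 else 0) := by
  obtain ⟨m, rfl⟩ : ∃ m, n = m + 1 := ⟨n - 1, by omega⟩
  have hm : 1 ≤ m := by omega
  have hIcc : ∑ j ∈ Finset.Icc 2 (m + 1), legendreLS (m + 1) j * (j.factorial : ℚ)
        * stirlingFirst j 2
      = ∑ j ∈ Finset.range (m + 2), legendreLS (m + 1) j * (j.factorial : ℚ)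
        * stirlingFirst j 2 := by
    apply Finset.sum_subset
    · intro x hx
      simp only [Finset.mem_Icc] at hx
      simp only [Finset.mem_range]
      omega
    · intro x hx hxn
      simp only [Finset.mem_range] at hx
      simp only [Finset.mem_Icc] at hxn
      have hx1 : x ≤ 1 := by omega
      interval_cases x
      · rw [legendreLS_zero (m + 1) (by omega)]; ring
      · rw [stirlingFirst_one_two]; ring
  rw [show m + 1 - 1 = m from rfl, hIcc, Wlem m hm]
  have hG : genocchiH m = ∑ k ∈ Finset.range (m + 1),
      (-1 : ℚ) ^ (m + k) * legendreLS m k * ((k.factorial : ℚ) * (k.factorial : ℚ)) := by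
    unfold genocchiH
    rw [Ftilde_eq_sum m hm 1]
    apply Finset.sum_congr rfl
    intro k _
    rw [Rpoly_one]
  rw [hG, Finset.mul_sum]
  have hsplit : ∀ k ∈ Finset.range (m + 1),
      (-1 : ℚ) ^ (m + 1) * (legendreLS m k * ((k + 1).factorial : ℚ) * stirlingFirst k 1)
        = (-1 : ℚ) ^ (m + k) * legendreLS m k * ((k.factorial : ℚ) * (k.factorial : ℚ))
          + (-1 : ℚ) ^ (m + k) * legendreLS m k * (k.factorial : ℚ)
            * (((k - 1).factorial : ℚ)) := by
    intro k _
    rcases Nat.eq_zero_or_pos k with rfl | hk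
    · rw [legendreLS_zero m hm]; ring
    · rw [stirlingFirst_one k hk]
      have hf1 : ((k + 1).factorial : ℚ) = ((k : ℚ) + 1) * (k.factorial : ℚ) := by
        rw [Nat.factorial_succ]; push_cast; ring
      have hf2 : (k.factorial : ℚ) = (k : ℚ) * (((k - 1).factorial : ℚ)) := by
        exact_mod_cast (Nat.mul_factorial_pred hk.ne').symm
      have hp : (-1 : ℚ) ^ (m + 1) * (-1 : ℚ) ^ (k + 1) = (-1 : ℚ) ^ (m + k) := by
        rw [← pow_add, show m + 1 + (k + 1) = (m + k) + 2 by omega, pow_add]; norm_num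
      rw [hf1]
      linear_combination (legendreLS m k * (((k : ℚ) + 1) * (k.factorial : ℚ))
          * (((k - 1).factorial : ℚ))) * hp
        - ((-1 : ℚ) ^ (m + k) * legendreLS m k * (k.factorial : ℚ)) * hf2
  rw [Finset.sum_congr rfl hsplit, Finset.sum_add_distrib, Elem m hm]
  rcases eq_or_ne m 1 with rfl | h1
  · norm_num
  · rw [if_neg h1, if_neg (by omega)]
    ring
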